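/- Let p, q, l ∈ ℕ^n be multi-indices with supp q ∩ supp l = ∅ and |q| + |l| ≤ m (where |q| = Σ_k q_k), and let M(v) = ∏_k |v_k|^{2p_k} · ∏_k v_k^{q_k} · ∏_k (conj v_k)^{l_k} for v ∈ ℂ^n. Then for every v ∈ ℂ^n, ∫_{[0,2π]^{n−r}} M(Ψ_{Σθ_jη^j} v) ∏_{j=r+1}^n dθ_j/(2π) equals M(v) if (q − l)·W = 0 and equals 0 if (q − l)·W ≠ 0. -/

import Mathlib

open scoped BigOperators Classical
open MeasureTheory

lemma statement11_oneD (c : ℤ) :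
    (∫ t in Set.Icc (0:ℝ) (2 * Real.pi), Complex.exp ((c:ℂ) * Complex.I * (t:ℝ))) =
      if c = 0 then ((2 * Real.pi : ℝ) : ℂ) else 0 := by
  rw [MeasureTheory.integral_Icc_eq_integral_Ioc,
    ← intervalIntegral.integral_of_le (by positivity)]
  by_cases hc : c = 0
  · simp [hc]
  · rw [if_neg hc]
    have hne : (c:ℂ) * Complex.I ≠ 0 := by
      simp [Complex.I_ne_zero, Complex.ext_iff, hc]
    rw [integral_exp_mul_complex hne]
    have h1 : Complex.exp ((c:ℂ) * Complex.I * ((2 * Real.pi : ℝ) : ℂ)) = 1 := by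
      rw [show (c:ℂ) * Complex.I * ((2 * Real.pi : ℝ) : ℂ) = (c:ℤ) * (2 * Real.pi * Complex.I) by
        push_cast; ring]
      exact Complex.exp_int_mul_two_pi_mul_I c
    rw [h1]
    simp

lemma statement11_cubeInt {ι : Type*} [Fintype ι] (c : ι → ℤ) :
    (∫ θ : ι → ℝ in Set.univ.pi (fun _ => Set.Icc (0:ℝ) (2 * Real.pi)),
      ∏ j, Complex.exp ((c j : ℂ) * Complex.I * ((θ j : ℝ) : ℂ))) =
    if ∀ j, c j = 0 then (((2 * Real.pi : ℝ)) : ℂ) ^ (Fintype.card ι) else 0 := by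
  rw [← MeasureTheory.integral_indicator
    (MeasurableSet.univ_pi fun _ => measurableSet_Icc)]
  have heq : (Set.univ.pi (fun _ : ι => Set.Icc (0:ℝ) (2 * Real.pi))).indicator
      (fun θ : ι → ℝ => ∏ j, Complex.exp ((c j : ℂ) * Complex.I * ((θ j : ℝ) : ℂ)))
      = fun θ : ι → ℝ => ∏ j, (Set.Icc (0:ℝ) (2 * Real.pi)).indicator
          (fun t : ℝ => Complex.exp ((c j : ℂ) * Complex.I * ((t : ℝ) : ℂ))) (θ j) := by
    funext θ
    by_cases hθ : θ ∈ Set.univ.pi (fun _ : ι => Set.Icc (0:ℝ) (2 * Real.pi))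
    · rw [Set.indicator_of_mem hθ]
      refine Finset.prod_congr rfl fun j _ => ?_
      rw [Set.indicator_of_mem (hθ j (Set.mem_univ j))]
    · rw [Set.indicator_of_notMem hθ]
      simp only [Set.mem_pi, Set.mem_univ, forall_true_left, true_implies, not_forall] at hθ
      obtain ⟨j, hj⟩ := hθ
      exact (Finset.prod_eq_zero (Finset.mem_univ j)
        (by rw [Set.indicator_of_notMem hj])).symm
  rw [heq]
  beta_reduce
  rw [MeasureTheory.integral_fintype_prod_volume_eq_prod]
  have h1 : ∀ j : ι, (∫ t : ℝ, (Set.Icc (0:ℝ) (2 * Real.pi)).indicator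
      (fun t : ℝ => Complex.exp ((c j : ℂ) * Complex.I * ((t : ℝ) : ℂ))) t)
      = if c j = 0 then ((2 * Real.pi : ℝ) : ℂ) else 0 := by
    intro j
    rw [MeasureTheory.integral_indicator measurableSet_Icc]
    exact statement11_oneD (c j)
  simp_rw [h1]
  by_cases hall : ∀ j, c j = 0
  · simp [hall, Finset.card_univ]
  · rw [if_neg hall]
    obtain ⟨j, hj⟩ := not_forall.mp hall
    exact Finset.prod_eq_zero (Finset.mem_univ j) (by rw [if_neg hj])

/-- For multi-indices `p, q, l ∈ ℕⁿ` with disjoint supports of `q` and `l` and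
`|q| + |l| ≤ m`, and the monomial `M(v) = Π_k |v_k|^{2p_k} v_k^{q_k} (conj v_k)^{l_k}`, the average
of `M(Ψ_{Σθ_jη^j} v)` over the cube `[0,2π]^{n−r}` (normalised by `(2π)^{-(n−r)}`) equals `M(v)`
if `(q−l)·W = 0` and equals `0` if `(q−l)·W ≠ 0`. -/
theorem statement11 (n m : ℕ) (W : Fin n → ℝ)
    (A : Set (Fin n → ℤ))
    (hA : A = {s : Fin n → ℤ | (∑ k, |s k|) ≤ (m : ℤ) ∧ (∑ k, (s k : ℝ) * W k) = 0})
    (AR : Submodule ℝ (Fin n → ℝ))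
    (hAR : AR = Submodule.span ℝ ((fun (s : Fin n → ℤ) (k : Fin n) => (s k : ℝ)) '' A))
    (r : ℕ) (hr : r = Module.finrank ℝ AR)
    (ζ : Fin n → Fin n → ℤ)
    (hspan : Submodule.span ℝ
        ((fun (j : Fin n) (k : Fin n) => (ζ j k : ℝ)) '' {j : Fin n | (j : ℕ) < r}) = AR)
    (hdet : (Matrix.of fun i j : Fin n => ζ j i).det = 1 ∨
        (Matrix.of fun i j : Fin n => ζ j i).det = -1)
    (Rmat : Matrix (Fin n) (Fin n) ℝ)
    (hRmat : Rmat = Matrix.of fun i j : Fin n => (ζ j i : ℝ))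
    (η : Fin n → Fin n → ℝ)
    (hη : ∀ j : Fin n, η j = Rmat.transpose⁻¹.mulVec (Pi.single j 1))
    (p q l : Fin n → ℕ)
    (hsupp : ∀ k : Fin n, q k = 0 ∨ l k = 0)
    (hdeg : (∑ k, q k) + (∑ k, l k) ≤ m)
    (M : (Fin n → ℂ) → ℂ)
    (hM : ∀ v : Fin n → ℂ, M v = ∏ k,
        (((‖v k‖ : ℝ) : ℂ)) ^ (2 * p k) * (v k) ^ (q k) *
          (starRingEnd ℂ (v k)) ^ (l k))
    (Ψ : (Fin n → ℝ) → (Fin n → ℂ) → (Fin n → ℂ))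
    (hΨ : ∀ (α : Fin n → ℝ) (v : Fin n → ℂ) (k : Fin n),
        Ψ α v k = Complex.exp (Complex.I * Complex.ofReal (α k)) * v k) :
    ∀ v : Fin n → ℂ,
      (((2 * Real.pi) ^ (Fintype.card {j : Fin n // r ≤ (j : ℕ)}))⁻¹ : ℝ) •
          (∫ θ : {j : Fin n // r ≤ (j : ℕ)} → ℝ in
              Set.univ.pi (fun _ => Set.Icc (0:ℝ) (2 * Real.pi)),
            M (Ψ (fun k => ∑ j : {j : Fin n // r ≤ (j : ℕ)}, θ j * η (j : Fin n) k) v))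
        = if (∑ k, ((q k : ℝ) - (l k : ℝ)) * W k) = 0 then M v else 0 := by
  intro v
  classical
  -- matrix setup
  set Z : Matrix (Fin n) (Fin n) ℤ := Matrix.of fun i j : Fin n => ζ j i with hZ
  have hZu : IsUnit Z.det := by
    rcases hdet with h | h <;> rw [Int.isUnit_iff] <;> [left; right] <;> exact h
  set Y : Matrix (Fin n) (Fin n) ℤ := Z⁻¹ with hYdef
  have hZY : Z * Y = 1 := Matrix.mul_nonsing_inv Z hZu
  have hYZ : Y * Z = 1 := Matrix.nonsing_inv_mul Z hZu
  have hRmap : Rmat = Z.map (Int.cast : ℤ → ℝ) := by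
    rw [hRmat]; ext i j; simp [hZ, Matrix.map_apply]
  have hRinv : Rmat⁻¹ = Y.map (Int.cast : ℤ → ℝ) := by
    apply Matrix.inv_eq_right_inv
    ext i j
    have h2 : (∑ k, Z i k * Y k j) = (1 : Matrix (Fin n) (Fin n) ℤ) i j := by
      rw [← Matrix.mul_apply, hZY]
    simp only [hRmap, Matrix.mul_apply, Matrix.map_apply, Matrix.one_apply]
    have h3 : (∑ k, ((Z i k : ℝ)) * ((Y k j : ℝ))) = (((∑ k, Z i k * Y k j : ℤ)) : ℝ) := by
      push_cast; rfl
    rw [h3, h2, Matrix.one_apply]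
    split_ifs <;> simp
  have hηY : ∀ j k : Fin n, η j k = ((Y j k : ℝ)) := by
    intro j k
    rw [hη j, ← Matrix.transpose_nonsing_inv, hRinv, Matrix.mulVec_single]
    simp [Matrix.transpose_apply, Matrix.map_apply]
  -- integer vectors
  set s : Fin n → ℤ := fun k => (q k : ℤ) - (l k : ℤ) with hs
  set x : Fin n → ℤ := Y.mulVec s with hx
  have hxj : ∀ j : Fin n, ((x j : ℝ)) = ∑ k, η j k * ((s k : ℝ)) := by
    intro j
    rw [hx]
    simp only [Matrix.mulVec, dotProduct]
    push_cast
    exact Finset.sum_congr rfl fun k _ => by rw [hηY]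
  have hsx : Z.mulVec x = s := by
    rw [hx, Matrix.mulVec_mulVec, hZY, Matrix.one_mulVec]
  -- linear functionals
  have mkLin : ∀ w : Fin n → ℝ, ∃ φ : (Fin n → ℝ) →ₗ[ℝ] ℝ,
      ∀ u : Fin n → ℝ, φ u = ∑ k, w k * u k := by
    intro w
    refine ⟨{ toFun := fun u => ∑ k, w k * u k,
              map_add' := ?_, map_smul' := ?_ }, fun u => rfl⟩
    · intro u u'; simp [mul_add, Finset.sum_add_distrib]
    · intro c u
      simp only [smul_eq_mul, Pi.smul_apply, RingHom.id_apply, Finset.mul_sum]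
      exact Finset.sum_congr rfl fun k _ => by ring
  -- the key equivalence
  have hequiv : (∀ j : {j : Fin n // r ≤ (j : ℕ)}, x (j : Fin n) = 0) ↔
      (∑ k, ((q k : ℝ) - (l k : ℝ)) * W k = 0) := by
    constructor
    · intro hall
      obtain ⟨ψ, hψ⟩ := mkLin W
      have hAker : AR ≤ LinearMap.ker ψ := by
        rw [hAR]
        rw [Submodule.span_le]
        rintro - ⟨a, ha, rfl⟩
        rw [hA] at ha
        simp only [SetLike.mem_coe, LinearMap.mem_ker]
        rw [hψ]
        simpa [mul_comm] using ha.2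
      have hmem : (fun k => ((s k : ℝ))) ∈ AR := by
        rw [← hspan]
        have hrep : (fun k => ((s k : ℝ))) =
            ∑ j : Fin n, ((x j : ℝ)) • (fun k => ((ζ j k : ℝ))) := by
          funext k
          have : s k = ∑ j, Z k j * x j := by
            rw [← hsx]; simp [Matrix.mulVec, dotProduct]
          rw [this]
          push_cast
          simp only [Finset.sum_apply, Pi.smul_apply, smul_eq_mul]
          exact Finset.sum_congr rfl fun j _ => by rw [hZ]; simp [Matrix.of_apply]; ring
        rw [hrep]
        refine Submodule.sum_mem _ fun j _ => ?_
        by_cases hj : (j : ℕ) < r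
        · exact Submodule.smul_mem _ _ (Submodule.subset_span ⟨j, hj, rfl⟩)
        · have : x j = 0 := hall ⟨j, not_lt.mp hj⟩
          rw [this]
          simp
      have := hAker hmem
      rw [LinearMap.mem_ker, hψ] at this
      rw [← this]
      refine Finset.sum_congr rfl fun k _ => ?_
      rw [hs]; push_cast; ring
    · intro hW0 j
      -- s ∈ A, hence cast s ∈ AR
      have hsA : s ∈ A := by
        rw [hA]
        constructor
        · have habs : ∀ k, |s k| = (q k : ℤ) + (l k : ℤ) := by
            intro k
            rcases hsupp k with h | h <;> rw [hs] <;> simp [h, abs_of_nonpos, abs_of_nonneg]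
          calc (∑ k, |s k|) = ∑ k, ((q k : ℤ) + (l k : ℤ)) :=
                Finset.sum_congr rfl fun k _ => habs k
            _ = (∑ k, (q k : ℤ)) + ∑ k, (l k : ℤ) := Finset.sum_add_distrib
            _ ≤ (m : ℤ) := by exact_mod_cast hdeg
        · rw [← hW0]
          refine Finset.sum_congr rfl fun k _ => ?_
          rw [hs]; push_cast; ring
      have hmem : (fun k => ((s k : ℝ))) ∈ AR := by
        rw [hAR]
        exact Submodule.subset_span ⟨s, hsA, rfl⟩
      obtain ⟨φ, hφ⟩ := mkLin (η (j : Fin n))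
      have hker : AR ≤ LinearMap.ker φ := by
        rw [← hspan, Submodule.span_le]
        rintro - ⟨i, hi, rfl⟩
        simp only [SetLike.mem_coe, LinearMap.mem_ker]
        rw [hφ]
        have : ∑ k, η (j : Fin n) k * ((ζ i k : ℝ)) = (((Y * Z) (j : Fin n) i : ℤ) : ℝ) := by
          rw [Matrix.mul_apply]
          push_cast
          refine Finset.sum_congr rfl fun k _ => ?_
          rw [hηY, hZ]; simp [Matrix.of_apply]
        rw [this, hYZ]
        have hne : (j : Fin n) ≠ i := by
          intro h
          have := j.2
          rw [h] at this
          exact absurd hi (not_lt.mpr this)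
        rw [Matrix.one_apply_ne hne]
        simp
      have := hker hmem
      rw [LinearMap.mem_ker, hφ] at this
      have h0 : ((x ((j : Fin n)) : ℝ)) = 0 := by rw [hxj]; exact this
      exact_mod_cast h0
  -- the monomial transforms by a character
  have key : ∀ θ : {j : Fin n // r ≤ (j : ℕ)} → ℝ,
      M (Ψ (fun k => ∑ j : {j : Fin n // r ≤ (j : ℕ)}, θ j * η (j : Fin n) k) v)
        = (∏ j : {j : Fin n // r ≤ (j : ℕ)},
            Complex.exp ((x (j : Fin n) : ℂ) * Complex.I * ((θ j : ℝ) : ℂ))) * M v := by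
    intro θ
    set α : Fin n → ℝ := fun k => ∑ j : {j : Fin n // r ≤ (j : ℕ)}, θ j * η (j : Fin n) k
      with hα
    have hfac : ∀ k : Fin n,
        (((‖Ψ α v k‖ : ℝ) : ℂ)) ^ (2 * p k) * (Ψ α v k) ^ (q k) *
            (starRingEnd ℂ (Ψ α v k)) ^ (l k)
          = Complex.exp (Complex.I * ((α k : ℝ) : ℂ) * (((q k : ℝ) : ℂ) - ((l k : ℝ) : ℂ))) *
            ((((‖v k‖ : ℝ) : ℂ)) ^ (2 * p k) * (v k) ^ (q k) *
              (starRingEnd ℂ (v k)) ^ (l k)) := by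
      intro k
      rw [hΨ]
      have habs : ‖(Complex.exp (Complex.I * ((α k : ℝ) : ℂ)) * v k)‖
          = ‖v k‖ := by
        rw [norm_mul, Complex.norm_exp]
        simp
      rw [habs, mul_pow, map_mul, mul_pow]
      have hconj : (starRingEnd ℂ) (Complex.exp (Complex.I * ((α k : ℝ) : ℂ)))
          = Complex.exp (-(Complex.I * ((α k : ℝ) : ℂ))) := by
        rw [← Complex.exp_conj]
        congr 1
        simp [Complex.ext_iff]
      rw [hconj, ← Complex.exp_nat_mul, ← Complex.exp_nat_mul]
      rw [show (((‖v k‖ : ℝ) : ℂ)) ^ (2 * p k) *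
          (Complex.exp ((q k : ℕ) * (Complex.I * ((α k : ℝ) : ℂ))) * (v k) ^ (q k)) *
          (Complex.exp ((l k : ℕ) * -(Complex.I * ((α k : ℝ) : ℂ))) *
            (starRingEnd ℂ (v k)) ^ (l k))
          = (Complex.exp ((q k : ℕ) * (Complex.I * ((α k : ℝ) : ℂ))) *
              Complex.exp ((l k : ℕ) * -(Complex.I * ((α k : ℝ) : ℂ)))) *
            ((((‖v k‖ : ℝ) : ℂ)) ^ (2 * p k) * (v k) ^ (q k) *
              (starRingEnd ℂ (v k)) ^ (l k)) by ring]
      rw [← Complex.exp_add]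
      congr 2
      push_cast
      ring
    rw [hM, hM]
    calc (∏ k, (((‖Ψ α v k‖ : ℝ) : ℂ)) ^ (2 * p k) * (Ψ α v k) ^ (q k) *
            (starRingEnd ℂ (Ψ α v k)) ^ (l k))
        = ∏ k, (Complex.exp (Complex.I * ((α k : ℝ) : ℂ) *
              (((q k : ℝ) : ℂ) - ((l k : ℝ) : ℂ))) *
            ((((‖v k‖ : ℝ) : ℂ)) ^ (2 * p k) * (v k) ^ (q k) *
              (starRingEnd ℂ (v k)) ^ (l k))) := Finset.prod_congr rfl fun k _ => hfac k
      _ = (∏ k, Complex.exp (Complex.I * ((α k : ℝ) : ℂ) *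
              (((q k : ℝ) : ℂ) - ((l k : ℝ) : ℂ)))) *
            ∏ k, ((((‖v k‖ : ℝ) : ℂ)) ^ (2 * p k) * (v k) ^ (q k) *
              (starRingEnd ℂ (v k)) ^ (l k)) := Finset.prod_mul_distrib
      _ = (∏ j : {j : Fin n // r ≤ (j : ℕ)},
            Complex.exp ((x (j : Fin n) : ℂ) * Complex.I * ((θ j : ℝ) : ℂ))) *
            ∏ k, ((((‖v k‖ : ℝ) : ℂ)) ^ (2 * p k) * (v k) ^ (q k) *
              (starRingEnd ℂ (v k)) ^ (l k)) := by
          congr 1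
          rw [← Complex.exp_sum, ← Complex.exp_sum]
          congr 1
          have hxsum : ∀ j : Fin n,
              (∑ k, ((η j k : ℝ) : ℂ) * (((q k : ℝ) : ℂ) - ((l k : ℝ) : ℂ)))
                = (((x j : ℝ)) : ℂ) := by
            intro j
            rw [hxj j]
            push_cast
            refine Finset.sum_congr rfl fun k _ => ?_
            simp only [hs]
            push_cast
            ring
          calc (∑ k, Complex.I * ((α k : ℝ) : ℂ) * (((q k : ℝ) : ℂ) - ((l k : ℝ) : ℂ)))
              = ∑ k, ∑ j : {j : Fin n // r ≤ (j : ℕ)}, ((θ j : ℝ) : ℂ) *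
                  (((η ((j : Fin n)) k : ℝ) : ℂ) *
                    (((q k : ℝ) : ℂ) - ((l k : ℝ) : ℂ)) * Complex.I) := by
                refine Finset.sum_congr rfl fun k _ => ?_
                rw [hα]
                push_cast
                rw [Finset.mul_sum, Finset.sum_mul]
                exact Finset.sum_congr rfl fun j _ => by ring
            _ = ∑ j : {j : Fin n // r ≤ (j : ℕ)}, ∑ k, ((θ j : ℝ) : ℂ) *
                  (((η ((j : Fin n)) k : ℝ) : ℂ) *
                    (((q k : ℝ) : ℂ) - ((l k : ℝ) : ℂ)) * Complex.I) := Finset.sum_comm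
            _ = ∑ j : {j : Fin n // r ≤ (j : ℕ)},
                  ((x ((j : Fin n)) : ℂ)) * Complex.I * ((θ j : ℝ) : ℂ) := by
                refine Finset.sum_congr rfl fun j _ => ?_
                have h4 : (∑ k, ((η ((j : Fin n)) k : ℝ) : ℂ) *
                    (((q k : ℝ) : ℂ) - ((l k : ℝ) : ℂ)) * Complex.I)
                    = (((x ((j : Fin n)) : ℝ)) : ℂ) * Complex.I := by
                  rw [← Finset.sum_mul, hxsum]
                rw [← Finset.mul_sum, h4]
                push_cast
                ring
  -- compute the integral
  simp_rw [key]
  rw [MeasureTheory.integral_mul_const, statement11_cubeInt]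
  by_cases hcond : (∑ k, ((q k : ℝ) - (l k : ℝ)) * W k) = 0
  · rw [if_pos hcond, if_pos (hequiv.mpr hcond)]
    rw [Complex.real_smul]
    push_cast
    rw [← mul_assoc, inv_mul_cancel₀ (pow_ne_zero _ (mul_ne_zero two_ne_zero
      (Complex.ofReal_ne_zero.mpr Real.pi_ne_zero))), one_mul]
  · rw [if_neg hcond, if_neg (fun h => hcond (hequiv.mp h))]
    simp
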